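/- Fix w ∈ ℝ^n, b ∈ ℝ, x ∈ ℝ^n and bounds L, U ∈ ℝ with L ≤ w·x + b ≤ U. Then a real number y satisfies, for some z ∈ {0,1}, the big-M constraints y ≥ 0, y ≥ w·x + b, y ≤ w·x + b − L·(1 − z), and y ≤ U·z, if and only if y = max(0, w·x + b). -/
import Mathlib


/-- Big-M formulation of a single ReLU neuron is exact:
given valid pre-activation bounds `L ≤ w·x + b ≤ U`, a real `y` satisfies the big-M
constraints for some binary `z` iff `y = max 0 (w·x + b)`. -/
theorem bigM_relu_exact (n : ℕ) (w x : Fin n → ℝ) (b L U : ℝ)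
    (hL : L ≤ (∑ i, w i * x i) + b) (hU : (∑ i, w i * x i) + b ≤ U) (y : ℝ) :
    (∃ z : ℝ, (z = 0 ∨ z = 1) ∧
        0 ≤ y ∧
        (∑ i, w i * x i) + b ≤ y ∧
        y ≤ (∑ i, w i * x i) + b - L * (1 - z) ∧
        y ≤ U * z) ↔
      y = max 0 ((∑ i, w i * x i) + b) := by
  set a := (∑ i, w i * x i) + b with ha
  constructor
  · rintro ⟨z, (rfl | rfl), h0, h1, h2, h3⟩
    · have hy0 : y = 0 := le_antisymm (by simpa using h3) h0
      rw [hy0]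
      exact (max_eq_left (hy0 ▸ h1)).symm
    · have : y = a := le_antisymm (by simpa using h2) h1
      rw [this]
      exact (max_eq_right (this ▸ h0)).symm
  · rintro rfl
    rcases le_total a 0 with h | h
    · refine ⟨0, Or.inl rfl, le_max_left _ _, le_max_right _ _, ?_, by simp [max_eq_left h]⟩
      simp [max_eq_left h]; linarith
    · refine ⟨1, Or.inr rfl, le_max_left _ _, le_max_right _ _, by simp [h], ?_⟩
      simp [max_eq_right h]; linarith
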